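/- arXiv:1810.12293 — 8 statements merged into one kernel-verified Lean document; each statement's English description precedes it below -/
import Mathlib

section
/- For any system parameters kp, γp, γr > 0 and controller gains k1, k2 ∈ ℝ, the closed-loop state matrix Acl = [[−γr, −k1, k2], [kp, −γp, 0], [0, −1, 0]] is Hurwitz (all eigenvalues over ℂ have negative real part) if and only if k1 > k2/(γp + γr) − γp·γr/kp and k2 > 0. -/
/-- A real square matrix is Hurwitz if all of its eigenvalues over `ℂ` have
negative real part. -/
def IsHurwitz {n : ℕ} (A : Matrix (Fin n) (Fin n) ℝ) : Prop :=
  ∀ μ ∈ spectrum ℂ (A.map Complex.ofReal), μ.re < 0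

lemma cubic_has_real_root (a b c : ℝ) : ∃ r : ℝ, r^3 + a*r^2 + b*r + c = 0 := by
  set M : ℝ := 1 + |a| + |b| + |c| with hM
  have hM1 : 1 ≤ M := by
    have := abs_nonneg a; have := abs_nonneg b; have := abs_nonneg c; linarith
  have hcont : ContinuousOn (fun x : ℝ => x^3 + a*x^2 + b*x + c) (Set.Icc (-M) M) := by
    fun_prop
  have hfm : (-M)^3 + a*(-M)^2 + b*(-M) + c < 0 := by
    have h1 : a * M^2 ≤ |a| * M^2 := by
      nlinarith [le_abs_self a, sq_nonneg M]
    have h2 : -(b*M) ≤ |b| * M := by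
      nlinarith [neg_abs_le b, abs_nonneg b]
    have h3 : c ≤ |c| := le_abs_self c
    nlinarith [abs_nonneg a, abs_nonneg b, abs_nonneg c, sq_nonneg M]
  have hfp : 0 < M^3 + a*M^2 + b*M + c := by
    have h1 : -(a * M^2) ≤ |a| * M^2 := by
      nlinarith [neg_abs_le a, abs_nonneg a, sq_nonneg M]
    have h2 : -(b*M) ≤ |b| * M := by
      nlinarith [neg_abs_le b, abs_nonneg b]
    have h3 : -c ≤ |c| := neg_le_abs c
    nlinarith [abs_nonneg a, abs_nonneg b, abs_nonneg c, sq_nonneg M]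
  have hle : -M ≤ M := by linarith
  have := intermediate_value_Icc hle hcont
  have h0 : (0:ℝ) ∈ Set.Icc ((-M)^3 + a*(-M)^2 + b*(-M) + c) (M^3 + a*M^2 + b*M + c) :=
    ⟨hfm.le, hfp.le⟩
  obtain ⟨r, _, hr⟩ := this h0
  exact ⟨r, hr⟩

lemma routh_rev (a b c : ℝ) (ha : 0 < a) (hc : 0 < c) (hab : c < a*b)
    (z : ℂ) (hz : z^3 + (a:ℂ)*z^2 + b*z + c = 0) : z.re < 0 := by
  by_contra hre
  push_neg at hre
  set x := z.re with hx
  set y := z.im with hy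
  have hb : 0 < b := by nlinarith
  have hRe : x^3 - 3*x*y^2 + a*(x^2 - y^2) + b*x + c = 0 := by
    have := congrArg Complex.re hz
    simp [Complex.add_re, Complex.mul_re, Complex.mul_im, pow_succ, pow_zero,
      Complex.ofReal_re, Complex.ofReal_im] at this
    linarith [this]
  have hIm : y * (3*x^2 - y^2 + 2*a*x + b) = 0 := by
    have := congrArg Complex.im hz
    simp [Complex.add_im, Complex.mul_re, Complex.mul_im, pow_succ, pow_zero,
      Complex.ofReal_re, Complex.ofReal_im] at this
    linarith [this]
  rcases mul_eq_zero.mp hIm with h0 | h1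
  · rw [h0] at hRe
    nlinarith
  · have hy2 : y^2 = 3*x^2 + 2*a*x + b := by linarith
    rw [hy2] at hRe
    nlinarith [pow_nonneg hre 3, mul_nonneg ha.le (sq_nonneg x), mul_nonneg hb.le hre,
      mul_nonneg (mul_nonneg ha.le ha.le) hre]

lemma routh_fwd (a b c : ℝ)
    (H : ∀ z : ℂ, z^3 + (a:ℂ)*z^2 + b*z + c = 0 → z.re < 0) :
    0 < c ∧ c < a*b := by
  obtain ⟨r, hr⟩ := cubic_has_real_root a b c
  have hrC : (r:ℂ)^3 + (a:ℂ)*(r:ℂ)^2 + b*(r:ℂ) + c = 0 := by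
    exact_mod_cast congrArg (Complex.ofReal) hr
  have hrneg : r < 0 := by
    have := H (r:ℂ) hrC
    simpa using this
  set p : ℝ := a + r with hp_def
  set q : ℝ := b + a*r + r^2 with hq_def
  have key : ∀ z : ℂ, z^2 + (p:ℂ)*z + q = 0 → z.re < 0 := by
    intro z hzq
    apply H
    have : z^3 + (a:ℂ)*z^2 + b*z + c = (z - r) * (z^2 + (p:ℂ)*z + q)
        + ((r:ℂ)^3 + (a:ℂ)*(r:ℂ)^2 + b*(r:ℂ) + c) := by
      push_cast [hp_def, hq_def]; ring
    rw [this, hzq, hrC]; ring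
  have hpq : 0 < p ∧ 0 < q := by
    rcases le_or_gt (4*q) (p^2) with hd | hd
    · set s : ℝ := Real.sqrt (p^2 - 4*q) with hs_def
      have hs2 : s^2 = p^2 - 4*q := Real.sq_sqrt (by linarith)
      have hroot : ∀ z : ℝ, z^2 + p*z + q = 0 → z < 0 := by
        intro z hz
        have : ((z:ℂ))^2 + (p:ℂ)*(z:ℂ) + q = 0 := by
          exact_mod_cast congrArg (Complex.ofReal) hz
        simpa using key z this
      have h1 : (-p+s)/2 < 0 := hroot _ (by linear_combination hs2/4)
      have h2 : (-p-s)/2 < 0 := hroot _ (by linear_combination hs2/4)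
      have hs0 : 0 ≤ s := Real.sqrt_nonneg _
      constructor
      · linarith
      · nlinarith
    · set t : ℝ := Real.sqrt (4*q - p^2) with ht_def
      have ht2 : t^2 = 4*q - p^2 := Real.sq_sqrt (by linarith)
      have ht2C : (t:ℂ)^2 = 4*(q:ℂ) - (p:ℂ)^2 := by exact_mod_cast congrArg (Complex.ofReal) ht2
      set z0 : ℂ := (-(p:ℂ) + t*Complex.I)/2 with hz0
      have hz0root : z0^2 + (p:ℂ)*z0 + q = 0 := by
        rw [hz0]
        linear_combination ((t:ℂ)^2/4) * Complex.I_sq - (1/4) * ht2C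
      have hre : z0.re = -p/2 := by
        simp [hz0, Complex.div_re]
      have := key z0 hz0root
      rw [hre] at this
      have hp0 : 0 < p := by linarith
      exact ⟨hp0, by nlinarith⟩
  refine ⟨?_, ?_⟩
  · have hc : c = -r * q := by rw [hq_def]; nlinarith [hr]
    rw [hc]; nlinarith [hpq.2]
  · have ha : a = p - r := by rw [hp_def]; ring
    have hb : b = q - r*p := by rw [hq_def, hp_def]; ring
    have hc : c = -r * q := by rw [hq_def]; nlinarith [hr]
    rw [ha, hb, hc]
    nlinarith [hpq.1, hpq.2, mul_pos hpq.1 hpq.2,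
      mul_pos hpq.1 (mul_pos (neg_pos.mpr hrneg) (neg_pos.mpr hrneg)),
      mul_pos (mul_pos hpq.1 hpq.1) (neg_pos.mpr hrneg)]

theorem stmt0 (kp γp γr k1 k2 : ℝ) (hkp : 0 < kp) (hγp : 0 < γp) (hγr : 0 < γr) :
    IsHurwitz !![-γr, -k1, k2; kp, -γp, 0; 0, -1, 0] ↔
      (k1 > k2 / (γp + γr) - γp * γr / kp ∧ k2 > 0) := by
  have hspec : ∀ μ : ℂ,
      μ ∈ spectrum ℂ ((!![-γr, -k1, k2; kp, -γp, 0; 0, -1, 0]).map Complex.ofReal) ↔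
      μ^3 + ((γr+γp : ℝ):ℂ)*μ^2 + ((γp*γr + k1*kp : ℝ):ℂ)*μ + ((k2*kp : ℝ):ℂ) = 0 := by
    intro μ
    rw [spectrum.mem_iff]
    rw [Matrix.isUnit_iff_isUnit_det, isUnit_iff_ne_zero, not_ne_iff]
    rw [Matrix.algebraMap_eq_diagonal]
    push_cast
    simp [Matrix.det_fin_three, Matrix.diagonal, Matrix.vecHead, Matrix.vecTail]
    constructor <;> intro h <;> linear_combination h
  have ha : (0:ℝ) < γr + γp := by linarith
  have hiff : IsHurwitz !![-γr, -k1, k2; kp, -γp, 0; 0, -1, 0] ↔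
      (0 < k2*kp ∧ k2*kp < (γr+γp)*(γp*γr + k1*kp)) := by
    constructor
    · intro h
      exact routh_fwd _ _ _ (fun z hz => h z ((hspec z).mpr hz))
    · rintro ⟨h1, h2⟩ μ hμ
      exact routh_rev _ _ _ ha h1 h2 μ ((hspec μ).mp hμ)
  rw [hiff]
  have hne : (γp + γr) ≠ 0 := by positivity
  constructor
  · rintro ⟨h1, h2⟩
    have hk2 : 0 < k2 := by
      rcases mul_pos_iff.mp h1 with ⟨h, _⟩ | ⟨_, h⟩
      · exact h
      · linarith
    refine ⟨?_, hk2⟩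
    rw [gt_iff_lt, div_sub_div _ _ hne hkp.ne', div_lt_iff₀ (by positivity)]
    nlinarith
  · rintro ⟨h1, h2⟩
    refine ⟨by positivity, ?_⟩
    rw [gt_iff_lt, div_sub_div _ _ hne hkp.ne', div_lt_iff₀ (by positivity)] at h1
    nlinarith
end

section
/- Let kp⁺, γp⁻, γr⁻ > 0 and suppose the controller gains satisfy k2 > 0 and k1 > k2/(γp⁻ + γr⁻) − γr⁻·γp⁻/kp⁺. Then for every triple (kp, γp, γr) ∈ (0, kp⁺] × [γp⁻, ∞) × [γr⁻, ∞), the matrix Acl = [[−γr, −k1, k2], [kp, −γp, 0], [0, −1, 0]] is Hurwitz. -/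
/-- Routh–Hurwitz criterion for a monic cubic, phrased on real/imaginary parts
of a complex root. -/
lemma cubic_re_neg (a b c x y : ℝ) (ha : 0 < a) (hb : 0 < b) (hc : 0 < c)
    (hab : c < a * b)
    (h1 : x^3 - 3*x*y^2 + a*(x^2 - y^2) + b*x + c = 0)
    (h2 : 3*x^2*y - y^3 + 2*a*x*y + b*y = 0) : x < 0 := by
  by_contra hx
  push_neg at hx
  rcases eq_or_ne y 0 with hy | hy
  · subst hy
    nlinarith [mul_nonneg hx hx, mul_nonneg (mul_nonneg hx hx) hx,
      mul_nonneg hx ha.le, mul_nonneg (mul_nonneg hx hx) ha.le, mul_nonneg hx hb.le]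
  · have h3 : y * (3*x^2 - y^2 + 2*a*x + b) = 0 := by linarith [h2]
    have h4 : 3*x^2 - y^2 + 2*a*x + b = 0 := by
      rcases mul_eq_zero.mp h3 with h | h
      · exact absurd h hy
      · exact h
    have hy2 : y^2 = 3*x^2 + 2*a*x + b := by linarith
    rw [hy2] at h1
    nlinarith [mul_nonneg hx hx, mul_nonneg (mul_nonneg hx hx) hx,
      mul_nonneg hx ha.le, mul_nonneg (mul_nonneg hx hx) ha.le,
      mul_nonneg hx hb.le, mul_nonneg (mul_nonneg hx ha.le) ha.le]

/-- The vanishing determinant yields the characteristic polynomial equation. -/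
lemma det_to_poly (γr k1 k2 kp γp : ℝ) (μ : ℂ)
    (hdet : (μ • (1 : Matrix (Fin 3) (Fin 3) ℂ) -
      (!![-γr, -k1, k2; kp, -γp, 0; 0, -1, 0]).map Complex.ofReal).det = 0) :
    μ^3 + ((γr + γp : ℝ) : ℂ)*μ^2 + ((γr*γp + kp*k1 : ℝ) : ℂ)*μ
      + ((kp*k2 : ℝ) : ℂ) = 0 := by
  rw [Matrix.det_fin_three] at hdet
  simp [Matrix.smul_apply, Matrix.one_apply, Matrix.map_apply,
    Matrix.vecHead, Matrix.vecTail] at hdet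
  push_cast
  ring_nf at hdet ⊢
  linear_combination hdet

/-- Real and imaginary parts of a monic cubic equation with real coefficients. -/
lemma poly_re_im (a b c : ℝ) (μ : ℂ)
    (h : μ^3 + (a:ℂ)*μ^2 + (b:ℂ)*μ + (c:ℂ) = 0) :
    μ.re^3 - 3*μ.re*μ.im^2 + a*(μ.re^2 - μ.im^2) + b*μ.re + c = 0 ∧
    3*μ.re^2*μ.im - μ.im^3 + 2*a*μ.re*μ.im + b*μ.im = 0 := by
  rw [Complex.ext_iff] at h
  obtain ⟨h1, h2⟩ := h
  simp [pow_succ, Complex.mul_re, Complex.mul_im] at h1 h2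
  constructor <;> nlinarith [h1, h2]

/-- The Routh–Hurwitz coefficient conditions follow from the gain conditions. -/
lemma coeff_conds (kpP γpM γrM k1 k2 : ℝ)
    (hkpP : 0 < kpP) (hγpM : 0 < γpM) (hγrM : 0 < γrM)
    (hk2 : k2 > 0) (hk1 : k1 > k2 / (γpM + γrM) - γrM * γpM / kpP)
    (kp γp γr : ℝ) (hkp : 0 < kp) (hkpU : kp ≤ kpP) (hγp : γpM ≤ γp)
    (hγr : γrM ≤ γr) :
    0 < γr + γp ∧ 0 < γr*γp + kp*k1 ∧ 0 < kp*k2 ∧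
      kp*k2 < (γr + γp) * (γr*γp + kp*k1) := by
  have hS0 : (0:ℝ) < γpM + γrM := by positivity
  have ha : (0:ℝ) < γr + γp := by linarith
  have hc : (0:ℝ) < kp*k2 := by positivity
  have e1 : k2 / (γpM+γrM) < k1 + γrM*γpM/kpP := by linarith
  have e2 : k2 < (k1 + γrM*γpM/kpP) * (γpM+γrM) := (div_lt_iff₀ hS0).mp e1
  have e3 : γrM*γpM/kpP * kpP = γrM*γpM := div_mul_cancel₀ _ (ne_of_gt hkpP)
  have hk1' : k2*kpP < k1*kpP*(γpM+γrM) + γrM*γpM*(γpM+γrM) := by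
    have e4 := mul_lt_mul_of_pos_right e2 hkpP
    nlinarith [e4, e3]
  have h5 : kp*k2 < (γpM+γrM)*(kp*k1 + γrM*γpM) := by
    have e6 := mul_lt_mul_of_pos_left hk1' hkp
    have hm : kp*(γrM*γpM)*(γpM+γrM) ≤ kpP*(γrM*γpM)*(γpM+γrM) :=
      mul_le_mul_of_nonneg_right
        (mul_le_mul_of_nonneg_right hkpU (by positivity)) (by positivity)
    have e7 : kp*k2*kpP < ((γpM+γrM)*(kp*k1 + γrM*γpM))*kpP := by linarith [e6, hm]
    exact lt_of_mul_lt_mul_right e7 hkpP.le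
  have hq : 0 < kp*k1 + γrM*γpM := by nlinarith [h5, hc, hS0]
  have hgg : γrM*γpM ≤ γr*γp :=
    mul_le_mul hγr hγp hγpM.le (le_trans hγrM.le hγr)
  have hb : (0:ℝ) < γr*γp + kp*k1 := by linarith
  refine ⟨ha, hb, hc, ?_⟩
  have h6 : (γpM+γrM)*(kp*k1 + γrM*γpM) ≤ (γr + γp)*(kp*k1 + γrM*γpM) :=
    mul_le_mul_of_nonneg_right (by linarith) hq.le
  nlinarith [h5, h6, mul_le_mul_of_nonneg_left hgg ha.le]

theorem stmt1 (kpP γpM γrM k1 k2 : ℝ)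
    (hkpP : 0 < kpP) (hγpM : 0 < γpM) (hγrM : 0 < γrM)
    (hk2 : k2 > 0) (hk1 : k1 > k2 / (γpM + γrM) - γrM * γpM / kpP) :
    ∀ kp γp γr : ℝ, 0 < kp → kp ≤ kpP → γpM ≤ γp → γrM ≤ γr →
      IsHurwitz !![-γr, -k1, k2; kp, -γp, 0; 0, -1, 0] := by
  intro kp γp γr hkp hkpU hγp hγr μ hμ
  have hdet : (μ • (1 : Matrix (Fin 3) (Fin 3) ℂ) -
      (!![-γr, -k1, k2; kp, -γp, 0; 0, -1, 0]).map Complex.ofReal).det = 0 := by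
    rw [spectrum.mem_iff] at hμ
    rw [Matrix.isUnit_iff_isUnit_det, isUnit_iff_ne_zero, not_ne_iff] at hμ
    rwa [Algebra.algebraMap_eq_smul_one] at hμ
  have hpoly := det_to_poly γr k1 k2 kp γp μ hdet
  have hre := poly_re_im _ _ _ μ hpoly
  obtain ⟨ha, hb, hc, hab⟩ := coeff_conds kpP γpM γrM k1 k2 hkpP hγpM hγrM hk2 hk1
    kp γp γr hkp hkpU hγp hγr
  exact cubic_re_neg _ _ _ μ.re μ.im ha hb hc hab hre.1 hre.2
end

section
/- Let kp, γp, γr > 0, k1, k2 ∈ ℝ and q ≥ 0, and let H(s) = kp(k1·s + k2)/(s(s + γr)(s + γp)). Then for every real ω ≠ 0, the Popov inequality Re[(1 + q·iω)·H(iω)] > −1 holds if and only if ω⁴ + z1(q)·ω² + z0(q) > 0, where z0(q) = γr²γp² + kp[γr(γp·k1 − k2 + γp·k2·q) − γp·k2] and z1(q) = γp² + γr² + kp[(k1(γp + γr) − k2)·q − k1]. -/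
theorem stmt4 (kp γp γr k1 k2 q : ℝ) (hkp : 0 < kp) (hγp : 0 < γp) (hγr : 0 < γr)
    (hq : 0 ≤ q) (ω : ℝ) (hω : ω ≠ 0) :
    (((1 + (q : ℂ) * Complex.I * (ω : ℂ)) *
        ((kp : ℂ) * ((k1 : ℂ) * (Complex.I * (ω : ℂ)) + (k2 : ℂ)) /
          ((Complex.I * (ω : ℂ)) * (Complex.I * (ω : ℂ) + (γr : ℂ)) *
            (Complex.I * (ω : ℂ) + (γp : ℂ))))).re > -1) ↔
      ω ^ 4 + (γp ^ 2 + γr ^ 2 + kp * ((k1 * (γp + γr) - k2) * q - k1)) * ω ^ 2 +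
        (γr ^ 2 * γp ^ 2 + kp * (γr * (γp * k1 - k2 + γp * k2 * q) - γp * k2)) > 0 := by
  have hω2 : 0 < ω ^ 2 := by positivity
  have hD : 0 < ω ^ 2 * γr ^ 2 * γp ^ 2 + ω ^ 4 * γr ^ 2 + ω ^ 4 * γp ^ 2 + ω ^ 6 := by
    positivity
  set Q : ℝ := ω ^ 4 + (γp ^ 2 + γr ^ 2 + kp * ((k1 * (γp + γr) - k2) * q - k1)) * ω ^ 2 +
        (γr ^ 2 * γp ^ 2 + kp * (γr * (γp * k1 - k2 + γp * k2 * q) - γp * k2)) with hQ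
  have key : (((1 + (q : ℂ) * Complex.I * (ω : ℂ)) *
        ((kp : ℂ) * ((k1 : ℂ) * (Complex.I * (ω : ℂ)) + (k2 : ℂ)) /
          ((Complex.I * (ω : ℂ)) * (Complex.I * (ω : ℂ) + (γr : ℂ)) *
            (Complex.I * (ω : ℂ) + (γp : ℂ))))).re) =
      ω ^ 2 * Q / (ω ^ 2 * γr ^ 2 * γp ^ 2 + ω ^ 4 * γr ^ 2 + ω ^ 4 * γp ^ 2 + ω ^ 6) - 1 := by
    rw [show ((1 + (q : ℂ) * Complex.I * (ω : ℂ)) *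
        ((kp : ℂ) * ((k1 : ℂ) * (Complex.I * (ω : ℂ)) + (k2 : ℂ)) /
          ((Complex.I * (ω : ℂ)) * (Complex.I * (ω : ℂ) + (γr : ℂ)) *
            (Complex.I * (ω : ℂ) + (γp : ℂ))))) =
      (1 + (q : ℂ) * Complex.I * (ω : ℂ)) *
        ((kp : ℂ) * ((k1 : ℂ) * (Complex.I * (ω : ℂ)) + (k2 : ℂ))) /
          ((Complex.I * (ω : ℂ)) * (Complex.I * (ω : ℂ) + (γr : ℂ)) *
            (Complex.I * (ω : ℂ) + (γp : ℂ))) from by ring]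
    rw [Complex.div_re]
    simp only [Complex.normSq_apply, Complex.mul_re, Complex.mul_im, Complex.add_re,
      Complex.add_im, Complex.one_re, Complex.one_im, Complex.I_re, Complex.I_im,
      Complex.ofReal_re, Complex.ofReal_im, hQ]
    rw [show ω ^ 2 * Q / (ω ^ 2 * γr ^ 2 * γp ^ 2 + ω ^ 4 * γr ^ 2 + ω ^ 4 * γp ^ 2 + ω ^ 6) - 1
        = (ω ^ 2 * Q - (ω ^ 2 * γr ^ 2 * γp ^ 2 + ω ^ 4 * γr ^ 2 + ω ^ 4 * γp ^ 2 + ω ^ 6)) /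
          (ω ^ 2 * γr ^ 2 * γp ^ 2 + ω ^ 4 * γr ^ 2 + ω ^ 4 * γp ^ 2 + ω ^ 6) from by
        rw [sub_div, div_self (by positivity)],
      ← add_div, div_eq_div_iff (by ring_nf; positivity) (by positivity)]
    ring
  rw [key, gt_iff_lt, show (-1 : ℝ) = 0 - 1 from by norm_num, sub_lt_sub_iff_right,
    lt_div_iff₀ hD]
  constructor
  · intro h; nlinarith
  · intro h; nlinarith
end

section
/- Let kp, γp, γr > 0, μ* > 0, ū > 0, and let φ(u) = min{max{0, u}, ū}. Suppose the PI gains satisfy k2 > 0 and k1 > k2/(γp + γr), and let δu ∈ ℝ be a constant input disturbance satisfying (γp·γr/kp)·μ* − ū ≤ δu ≤ (γp·γr/kp)·μ*. Then every continuously differentiable solution (x1, x2, I) : [0, ∞) → ℝ³ of the disturbed closed-loop system ẋ1 = −γr·x1 + φ(k1(μ* − x2) + k2·I) + δu, ẋ2 = kp·x1 − γp·x2, İ = μ* − x2 satisfies x2(t) → μ* as t → ∞, i.e., the constant disturbance is rejected. -/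
lemma hasDerivAt_maxsq (x : ℝ) : HasDerivAt (fun y : ℝ => (max 0 y)^2) (2 * max 0 x) x := by
  rcases lt_trichotomy x 0 with hx | hx | hx
  · have h0 : HasDerivAt (fun _ : ℝ => (0:ℝ)) 0 x := hasDerivAt_const x 0
    have heq : (fun y : ℝ => (max 0 y)^2) =ᶠ[nhds x] fun _ => (0:ℝ) := by
      filter_upwards [Iio_mem_nhds hx] with y (hy : y < 0)
      simp [max_eq_left hy.le]
    have := h0.congr_of_eventuallyEq heq
    simpa [max_eq_left hx.le] using this
  · subst hx
    rw [hasDerivAt_iff_isLittleO]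
    rw [Asymptotics.isLittleO_iff]
    intro c hc
    filter_upwards [Metric.ball_mem_nhds (0:ℝ) hc] with y hy
    have h1 : |y - 0| < c := by simpa [Real.dist_eq] using hy
    have h2 : (max 0 y)^2 ≤ |y| * |y| := by
      rcases le_total y 0 with h | h
      · simp only [max_eq_left h]
        have : (0:ℝ) ≤ |y| * |y| := mul_nonneg (abs_nonneg y) (abs_nonneg y)
        simpa using this
      · rw [max_eq_right h, abs_of_nonneg h]; nlinarith
    simp only [max_self, ne_eq, OfNat.ofNat_ne_zero, not_false_eq_true, zero_pow, mul_zero,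
      smul_eq_mul, sub_zero]
    have h1' : |y| ≤ c := by simpa using h1.le
    calc ‖(max 0 y)^2‖ = (max 0 y)^2 := by
            rw [Real.norm_eq_abs, abs_of_nonneg (sq_nonneg _)]
      _ ≤ |y| * |y| := h2
      _ ≤ c * ‖y‖ := by
            rw [Real.norm_eq_abs]
            exact mul_le_mul_of_nonneg_right h1' (abs_nonneg y)
  · have h0 : HasDerivAt (fun y : ℝ => y^2) (2*x) x := by
      simpa using (hasDerivAt_pow 2 x)
    have heq : (fun y : ℝ => (max 0 y)^2) =ᶠ[nhds x] fun y => y^2 := by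
      filter_upwards [Ioi_mem_nhds hx] with y (hy : 0 < y)
      simp [max_eq_right hy.le]
    have := h0.congr_of_eventuallyEq heq
    simpa [max_eq_right hx.le] using this

lemma min_zero_eq (y : ℝ) : min 0 y = -(max 0 (-y)) := by
  rcases le_total y 0 with h | h
  · simp [min_eq_right h, max_eq_right (neg_nonneg.2 h)]
  · simp [min_eq_left h, max_eq_left (neg_nonpos.2 h)]

lemma hasDerivAt_minsq (x : ℝ) : HasDerivAt (fun y : ℝ => (min 0 y)^2) (2 * min 0 x) x := by
  have h1 : HasDerivAt (fun y : ℝ => -y) (-1) x := by exact (hasDerivAt_id x).neg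
  have h2 := (hasDerivAt_maxsq (-x)).comp x h1
  have heq : (fun y : ℝ => (min 0 y)^2) = fun y => (max 0 (-y))^2 := by
    funext y; rw [min_zero_eq y]; ring
  rw [heq]
  convert h2 using 1
  · rfl
  · rfl
  · rfl
  rw [min_zero_eq x]; ring

lemma psi_eq (us uBar σ : ℝ) (h0 : 0 ≤ us) (h1 : us ≤ uBar) :
    min (max 0 (σ + us)) uBar - us = σ - max 0 (σ - (uBar - us)) - min 0 (σ + us) := by
  rcases le_total (σ + us) 0 with h | h
  · rw [max_eq_left h, min_eq_right h, min_eq_left (by linarith),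
      max_eq_left (by linarith)]
    ring
  · rw [max_eq_right h, min_eq_left h]
    rcases le_total (σ + us) uBar with h2 | h2
    · rw [min_eq_left h2, max_eq_left (by linarith)]; ring
    · rw [min_eq_right h2, max_eq_right (by linarith)]; ring

lemma psi_sq_le (us uBar w : ℝ) (h0 : 0 ≤ us) (h1 : us ≤ uBar) :
    (max 0 (w - (uBar - us)))^2 + (min 0 (w + us))^2 ≤ w^2 := by
  rcases le_total (uBar - us) w with h | h
  · rw [max_eq_right (by linarith), min_eq_left (by linarith)]
    nlinarith
  · rw [max_eq_left (by linarith)]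
    rcases le_total (w + us) 0 with h2 | h2
    · rw [min_eq_right h2]; nlinarith
    · rw [min_eq_left h2]; nlinarith

set_option maxHeartbeats 16000000 in
theorem stmt7 (kp γp γr μ k1 k2 uBar δu : ℝ)
    (hkp : 0 < kp) (hγp : 0 < γp) (hγr : 0 < γr) (hμ : 0 < μ) (huBar : 0 < uBar)
    (hk2 : 0 < k2) (hk1 : k1 > k2 / (γp + γr))
    (hδl : (γp * γr / kp) * μ - uBar ≤ δu) (hδu : δu ≤ (γp * γr / kp) * μ)
    (x1 x2 I : ℝ → ℝ)
    (hx1 : ∀ t : ℝ, 0 ≤ t →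
      HasDerivAt x1
        (-γr * x1 t + min (max 0 (k1 * (μ - x2 t) + k2 * I t)) uBar + δu) t)
    (hx2 : ∀ t : ℝ, 0 ≤ t → HasDerivAt x2 (kp * x1 t - γp * x2 t) t)
    (hI : ∀ t : ℝ, 0 ≤ t → HasDerivAt I (μ - x2 t) t) :
    Filter.Tendsto x2 Filter.atTop (nhds μ) := by
  have hkpne : kp ≠ 0 := ne_of_gt hkp
  have hγpγr : (0:ℝ) < γp + γr := by linarith
  have hk1pos : 0 < k1 := lt_trans (div_pos hk2 hγpγr) hk1
  have hK : k2 < k1 * (γp + γr) := (div_lt_iff₀ hγpγr).mp hk1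
  set us : ℝ := γp * γr / kp * μ - δu with hus_def
  have hus0 : 0 ≤ us := by rw [hus_def]; linarith [hδu]
  have husB : us ≤ uBar := by rw [hus_def]; linarith [hδl]
  set z1 : ℝ → ℝ := fun t => x1 t - γp * μ / kp with hz1_def
  set z2 : ℝ → ℝ := fun t => x2 t - μ with hz2_def
  set w : ℝ → ℝ := fun t => k1 * (μ - x2 t) + k2 * I t - us with hw_def
  set ψ : ℝ → ℝ := fun σ => min (max 0 (σ + us)) uBar - us with hψ_def
  set Ψ : ℝ → ℝ :=
    fun σ => (σ^2 - (max 0 (σ - (uBar - us)))^2 - (min 0 (σ + us))^2)/2 with hΨ_def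
  set q : ℝ := kp * (k1*(γp+γr) - k2) with hq_def
  have hq : 0 < q := mul_pos hkp (by linarith)
  set b : ℝ := (q*γp + kp*k2*γr)/(2*kp^2) with hb_def
  have hb : 0 < b := by
    apply div_pos
    · have : 0 < q*γp := mul_pos hq hγp
      nlinarith [mul_pos (mul_pos hkp hk2) hγr]
    · positivity
  set c : ℝ := γp*k2*γr/kp with hc_def
  have hc : 0 < c := by rw [hc_def]; positivity
  set a : ℝ := k1*kp/2 with ha_def
  have ha : 0 < a := by rw [ha_def]; positivity
  set d : ℝ := k2 - k1*γp with hd_def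
  set m : ℝ := 2*b*kp + (k1*γp - k2)*(γp+γr) with hm_def
  clear_value m d a c b q Ψ ψ w z2 z1 us
  have hkey : m^2 = 4*q*(2*b*γp - c) := by
    rw [hm_def, hb_def, hc_def, hq_def]
    field_simp
    ring
  have hpd : d^2 < 4*a*b := by
    have h4ab : 4*a*b - d^2 = k1^2*γp*γr + k1*k2*(γp+γr) - k2^2 := by
      rw [ha_def, hb_def, hd_def, hq_def]
      field_simp
      ring
    nlinarith [mul_pos (mul_pos (mul_pos hk1pos hk1pos) hγp) hγr,
      mul_pos hk2 (sub_pos.mpr hK)]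
  -- derivatives of the shifted variables
  have hz1' : ∀ t, 0 ≤ t → HasDerivAt z1 (-γr * z1 t + ψ (w t)) t := by
    intro t ht
    have h := (hx1 t ht).sub_const (γp * μ / kp)
    have harg : w t + us = k1 * (μ - x2 t) + k2 * I t := by
      rw [hw_def]; ring
    convert h using 1
    · rfl
    · rfl
    rw [hψ_def]
    simp only
    rw [harg, hz1_def]
    simp only
    rw [hus_def]
    field_simp
    ring
  have hz2' : ∀ t, 0 ≤ t → HasDerivAt z2 (kp * z1 t - γp * z2 t) t := by
    intro t ht
    have h := (hx2 t ht).sub_const μ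
    convert h using 1
    · rfl
    · rfl
    rw [hz1_def, hz2_def]
    simp only
    field_simp
    ring
  have hw' : ∀ t, 0 ≤ t →
      HasDerivAt w (-(k1*kp) * z1 t + (k1*γp - k2) * z2 t) t := by
    intro t ht
    have h1 : HasDerivAt (fun s => k1 * (μ - x2 s)) (k1 * -(kp * x1 t - γp * x2 t)) t :=
      ((hx2 t ht).const_sub μ).const_mul k1
    have h2 : HasDerivAt (fun s => k2 * I s) (k2 * (μ - x2 t)) t :=
      (hI t ht).const_mul k2
    have h := (h1.add h2).sub_const us
    convert h using 1
    · rfl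
    · rfl
    · exact hw_def
    rw [hz1_def, hz2_def]
    simp only
    field_simp
    ring
  -- derivative of the antiderivative of ψ
  have hΨ' : ∀ σ : ℝ, HasDerivAt Ψ (ψ σ) σ := by
    intro σ
    have h1 : HasDerivAt (fun y : ℝ => y^2) (2*σ) σ := by simpa using hasDerivAt_pow 2 σ
    have hsub : HasDerivAt (fun y : ℝ => y - (uBar - us)) 1 σ := by
      simpa using (hasDerivAt_id σ).sub_const (uBar - us)
    have h2 : HasDerivAt (fun y : ℝ => (max 0 (y - (uBar - us)))^2)
        (2 * max 0 (σ - (uBar - us))) σ := by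
      have := (hasDerivAt_maxsq (σ - (uBar - us))).comp σ hsub
      simp at this; exact this
    have hadd : HasDerivAt (fun y : ℝ => y + us) 1 σ := by
      simpa using (hasDerivAt_id σ).add_const us
    have h3 : HasDerivAt (fun y : ℝ => (min 0 (y + us))^2) (2 * min 0 (σ + us)) σ := by
      have := (hasDerivAt_minsq (σ + us)).comp σ hadd
      simp at this; exact this
    have h := ((h1.sub h2).sub h3).div_const 2
    have heq : Ψ = fun σ => (σ^2 - (max 0 (σ - (uBar - us)))^2 - (min 0 (σ + us))^2)/2 :=
      hΨ_def
    rw [heq]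
    convert h using 1
    · rfl
    · rfl
    · rfl
    rw [hψ_def]
    simp only
    rw [psi_eq us uBar σ hus0 husB]
    ring
  -- the Lyapunov function
  set V : ℝ → ℝ := fun t => a * z1 t^2 + b * z2 t^2 + d * (z1 t * z2 t) + Ψ (w t)
    with hV_def
  set Vd : ℝ → ℝ := fun t => -q * z1 t^2 + m * (z1 t * z2 t) - 2*b*γp * z2 t^2
    with hVd_def
  clear_value Vd V
  have hV' : ∀ t, 0 ≤ t → HasDerivAt V (Vd t) t := by
    intro t ht
    have h1 := ((hz1' t ht).pow 2).const_mul a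
    have h2 := ((hz2' t ht).pow 2).const_mul b
    have h3 := ((hz1' t ht).mul (hz2' t ht)).const_mul d
    have h4 := (hΨ' (w t)).comp t (hw' t ht)
    have h := ((h1.add h2).add h3).add h4
    rw [hV_def]
    convert h using 1
    · rfl
    · rfl
    · rfl
    rw [hVd_def]
    simp only
    rw [ha_def, hd_def, hq_def, hm_def]
    ring
  have hVd_le : ∀ t, Vd t ≤ -c * z2 t^2 := by
    intro t
    rw [hVd_def]
    simp only
    have e : 4*q*(q*z1 t^2 - m*(z1 t*z2 t) + (2*b*γp - c)*z2 t^2)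
        = (2*q*z1 t - m*z2 t)^2 := by linear_combination (-(z2 t^2)) * hkey
    have h0 : 0 ≤ q*z1 t^2 - m*(z1 t*z2 t) + (2*b*γp - c)*z2 t^2 := by
      have h1 : 0 ≤ (2*q*z1 t - m*z2 t)^2 := sq_nonneg _
      nlinarith [hq]
    linarith
  have hΨ0 : ∀ σ : ℝ, 0 ≤ Ψ σ := by
    intro σ
    rw [hΨ_def]
    simp only
    have := psi_sq_le us uBar σ hus0 husB
    linarith
  have hV0 : ∀ t, 0 ≤ V t := by
    intro t
    rw [hV_def]
    simp only
    have hquad : 0 ≤ a * z1 t^2 + b * z2 t^2 + d * (z1 t * z2 t) := by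
      nlinarith [sq_nonneg (2*a*z1 t + d*z2 t), sq_nonneg (z2 t), ha, hpd]
    linarith [hΨ0 (w t)]
  -- V is nonincreasing on [0, ∞)
  have hVcont : ContinuousOn V (Set.Ici 0) := fun t ht =>
    ((hV' t ht).continuousAt).continuousWithinAt
  have hVanti : AntitoneOn V (Set.Ici 0) := by
    apply antitoneOn_of_hasDerivWithinAt_nonpos (convex_Ici 0) hVcont
      (f' := Vd)
    · intro t ht
      rw [interior_Ici] at ht
      exact ((hV' t (le_of_lt ht)).hasDerivWithinAt)
    · intro t ht
      rw [interior_Ici] at ht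
      have := hVd_le t
      have h3 := mul_nonneg hc.le (sq_nonneg (z2 t))
      linarith
  -- uniform bounds on z1, z2
  set K : ℝ := V 0 with hK_def
  clear_value K
  have hK0 : 0 ≤ K := by rw [hK_def]; exact hV0 0
  have hVleK : ∀ t, 0 ≤ t → V t ≤ K := by
    intro t ht
    rw [hK_def]
    exact hVanti (Set.self_mem_Ici) ht ht
  have hquadle : ∀ t, 0 ≤ t → a * z1 t^2 + b * z2 t^2 + d * (z1 t * z2 t) ≤ K := by
    intro t ht
    have h1 := hVleK t ht
    rw [hV_def] at h1
    simp only at h1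
    linarith [hΨ0 (w t)]
  have hpd' : 0 < 4*a*b - d^2 := by linarith
  set R1 : ℝ := Real.sqrt (4*b*K/(4*a*b - d^2)) with hR1_def
  set R2 : ℝ := Real.sqrt (4*a*K/(4*a*b - d^2)) with hR2_def
  clear_value R1 R2
  have hz1bd : ∀ t, 0 ≤ t → |z1 t| ≤ R1 := by
    intro t ht
    have h1 : (4*a*b - d^2) * z1 t^2 ≤ 4*b*K := by
      nlinarith [hquadle t ht, sq_nonneg (2*b*z2 t + d*z1 t), hb]
    have h2 : z1 t^2 ≤ 4*b*K/(4*a*b - d^2) := (le_div_iff₀ hpd').mpr (by linarith [h1])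
    rw [hR1_def]
    calc |z1 t| = Real.sqrt (z1 t^2) := (Real.sqrt_sq_eq_abs _).symm
      _ ≤ _ := Real.sqrt_le_sqrt h2
  have hz2bd : ∀ t, 0 ≤ t → |z2 t| ≤ R2 := by
    intro t ht
    have h1 : (4*a*b - d^2) * z2 t^2 ≤ 4*a*K := by
      nlinarith [hquadle t ht, sq_nonneg (2*a*z1 t + d*z2 t), ha]
    have h2 : z2 t^2 ≤ 4*a*K/(4*a*b - d^2) := (le_div_iff₀ hpd').mpr (by linarith [h1])
    rw [hR2_def]
    calc |z2 t| = Real.sqrt (z2 t^2) := (Real.sqrt_sq_eq_abs _).symm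
      _ ≤ _ := Real.sqrt_le_sqrt h2
  set Lip : ℝ := kp * R1 + γp * R2 with hLip_def
  clear_value Lip
  have hLip0 : 0 ≤ Lip := by
    rw [hLip_def, hR1_def, hR2_def]
    positivity
  -- z2 is Lipschitz on [0, ∞)
  have hderivbd : ∀ u, 0 ≤ u → |kp * z1 u - γp * z2 u| ≤ Lip := by
    intro u hu
    have h1 := hz1bd u hu
    have h2 := hz2bd u hu
    rw [hLip_def]
    have := abs_sub (kp * z1 u) (γp * z2 u)
    calc |kp * z1 u - γp * z2 u| ≤ |kp * z1 u| + |γp * z2 u| := abs_sub _ _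
      _ = kp * |z1 u| + γp * |z2 u| := by
          rw [abs_mul, abs_mul, abs_of_pos hkp, abs_of_pos hγp]
      _ ≤ kp * R1 + γp * R2 := by
          have := mul_le_mul_of_nonneg_left h1 hkp.le
          have := mul_le_mul_of_nonneg_left h2 hγp.le
          linarith
  have hLipschitz : ∀ s t, 0 ≤ s → s ≤ t → |z2 t - z2 s| ≤ Lip * (t - s) := by
    intro s t hs hst
    have hz2cont : ContinuousOn z2 (Set.Ici 0) := fun u hu =>
      ((hz2' u hu).continuousAt).continuousWithinAt
    have hg1 : AntitoneOn (fun u => z2 u - Lip * u) (Set.Ici 0) := by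
      apply antitoneOn_of_hasDerivWithinAt_nonpos (convex_Ici 0)
        (hz2cont.sub ((continuous_const.mul continuous_id).continuousOn))
        (f' := fun u => (kp * z1 u - γp * z2 u) - Lip)
      · intro u hu
        rw [interior_Ici] at hu
        have hlin : HasDerivAt (fun y : ℝ => Lip * y) Lip u := by
          simpa using (hasDerivAt_id u).const_mul Lip
        exact ((hz2' u hu.le).sub hlin).hasDerivWithinAt
      · intro u hu
        rw [interior_Ici] at hu
        have := hderivbd u hu.le
        have := le_abs_self (kp * z1 u - γp * z2 u)
        linarith
    have hg2 : AntitoneOn (fun u => -z2 u - Lip * u) (Set.Ici 0) := by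
      apply antitoneOn_of_hasDerivWithinAt_nonpos (convex_Ici 0)
        ((hz2cont.neg).sub ((continuous_const.mul continuous_id).continuousOn))
        (f' := fun u => -(kp * z1 u - γp * z2 u) - Lip)
      · intro u hu
        rw [interior_Ici] at hu
        have hlin : HasDerivAt (fun y : ℝ => Lip * y) Lip u := by
          simpa using (hasDerivAt_id u).const_mul Lip
        exact (((hz2' u hu.le).neg).sub hlin).hasDerivWithinAt
      · intro u hu
        rw [interior_Ici] at hu
        have := hderivbd u hu.le
        have := neg_abs_le (kp * z1 u - γp * z2 u)
        linarith
    have ht : (0:ℝ) ≤ t := le_trans hs hst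
    have e1 := hg1 hs ht hst
    have e2 := hg2 hs ht hst
    simp only at e1 e2
    rw [abs_le]
    constructor <;> linarith
  -- V converges to its infimum
  set Vm : ℝ → ℝ := fun t => V (max t 0) with hVm_def
  have hVmanti : Antitone Vm := by
    intro s t hst
    rw [hVm_def]
    exact hVanti (le_max_right s 0) (le_max_right t 0) (max_le_max hst le_rfl)
  have hbdd : BddBelow (Set.range Vm) := by
    refine ⟨0, ?_⟩
    rintro y ⟨t, rfl⟩
    exact hV0 _
  set Lv : ℝ := ⨅ t, Vm t with hLv_def
  clear_value Lv Vm
  have htend : Filter.Tendsto Vm Filter.atTop (nhds Lv) := by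
    rw [hLv_def]; exact tendsto_atTop_ciInf hVmanti hbdd
  have hLvle : ∀ t, Lv ≤ Vm t := by
    intro t; rw [hLv_def]; exact ciInf_le hbdd t
  -- z2 → 0
  have hz2lim : Filter.Tendsto z2 Filter.atTop (nhds 0) := by
    rw [Metric.tendsto_atTop]
    intro ε hε
    set δ : ℝ := ε / (2 * (Lip + 1)) with hδ_def
    have hδ : 0 < δ := by rw [hδ_def]; positivity
    set ρ : ℝ := c * (ε/2)^2 * δ with hρ_def
    clear_value ρ δ
    have hρ : 0 < ρ := by rw [hρ_def]; positivity
    have := htend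
    rw [Metric.tendsto_atTop] at this
    obtain ⟨T', hT'⟩ := this ρ hρ
    refine ⟨max T' 0, ?_⟩
    intro t ht
    by_contra hcon
    push_neg at hcon
    have habs : ε ≤ |z2 t| := by
      rw [Real.dist_eq, sub_zero] at hcon
      exact hcon
    have ht0 : (0:ℝ) ≤ t := le_trans (le_max_right T' 0) ht
    have hT0 : (0:ℝ) ≤ max T' 0 := le_max_right T' 0
    -- on [t, t+δ], |z2| ≥ ε/2
    have hz2big : ∀ u, u ∈ Set.Icc t (t+δ) → (ε/2)^2 ≤ z2 u^2 := by
      intro u hu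
      obtain ⟨hu1, hu2⟩ := hu
      have hLl : |z2 u - z2 t| ≤ Lip * (u - t) := hLipschitz t u ht0 hu1
      have hLd : Lip * (u - t) ≤ ε/2 := by
        have h1 : Lip * (u - t) ≤ Lip * δ := by
          apply mul_le_mul_of_nonneg_left (by linarith) hLip0
        have h2 : Lip * δ ≤ (Lip + 1) * δ := by linarith [hδ.le]
        have h3 : (Lip + 1) * δ = ε/2 := by
          rw [hδ_def]
          field_simp
        linarith
      have h4 : ε/2 ≤ |z2 u| := by
        have := abs_sub_abs_le_abs_sub (z2 t) (z2 u)
        have h5 : |z2 t - z2 u| ≤ ε/2 := by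
          rw [abs_sub_comm]; linarith
        linarith
      calc (ε/2)^2 ≤ |z2 u|^2 := by
            apply pow_le_pow_left₀ (by linarith) h4
        _ = z2 u^2 := sq_abs _
    -- V decreases by at least ρ over [t, t+δ]
    have hdec : V (t+δ) ≤ V t - ρ := by
      have hganti : AntitoneOn (fun u => V u + (c * (ε/2)^2) * u) (Set.Icc t (t+δ)) := by
        apply antitoneOn_of_hasDerivWithinAt_nonpos (convex_Icc t (t+δ))
          (f' := fun u => Vd u + c * (ε/2)^2)
        · intro u hu
          have hu0 : 0 ≤ u := le_trans ht0 hu.1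
          exact (((hV' u hu0).continuousAt).continuousWithinAt).add
            ((continuous_const.mul continuous_id).continuousOn u hu)
        · intro u hu
          rw [interior_Icc] at hu
          have hu0 : 0 ≤ u := le_trans ht0 hu.1.le
          have hlin : HasDerivAt (fun y : ℝ => (c * (ε/2)^2) * y) (c * (ε/2)^2) u := by
            simpa using (hasDerivAt_id u).const_mul (c * (ε/2)^2)
          exact ((hV' u hu0).add hlin).hasDerivWithinAt
        · intro u hu
          rw [interior_Icc] at hu
          have hmem : u ∈ Set.Icc t (t+δ) := ⟨hu.1.le, hu.2.le⟩
          have h1 := hz2big u hmem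
          have h2 := hVd_le u
          have h3 := mul_le_mul_of_nonneg_left h1 hc.le
          linarith
      have e := hganti (Set.left_mem_Icc.mpr (by linarith)) (Set.right_mem_Icc.mpr (by linarith))
        (by linarith)
      simp only at e
      rw [hρ_def]
      linarith
    have h1 : V t ≤ V (max T' 0) := hVanti hT0 ht0 ht
    have h2 : dist (Vm (max T' 0)) Lv < ρ := hT' (max T' 0) (le_max_left T' 0)
    have h3 : Vm (max T' 0) = V (max T' 0) := by
      rw [hVm_def]
      simp only
      rw [max_eq_left hT0]
    have h4 : V (max T' 0) < Lv + ρ := by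
      rw [Real.dist_eq] at h2
      have := abs_lt.mp h2
      linarith [h3 ▸ this.2]
    have h5 : Lv ≤ V (t+δ) := by
      have := hLvle (t+δ)
      rw [hVm_def] at this
      simp only at this
      rwa [max_eq_left (by linarith)] at this
    linarith
  -- conclude
  have hx2eq : x2 = fun t => z2 t + μ := by
    funext t
    rw [hz2_def]
    ring
  rw [hx2eq]
  have := hz2lim.add (tendsto_const_nhds (x := μ))
  simpa using this
end

section
/- Let kr, kp, γp, γr > 0. The linear system ẋ = A·x + B·kr with A = [[−γr, 0, 0, 0, 0], [kp, −γp, 0, 0, 0], [γr, 0, −2γr, 0, 0], [0, 0, kp, −(γr + γp), 0], [kp, γp, 0, 2kp, −2γp]] and B = (1, 0, 1, 0, 0)ᵀ has a unique equilibrium point x* (the solution of A·x* + B·kr = 0), and this equilibrium satisfies x2* = kp·kr/(γr·γp) and x5* = (1 + kp/(γp + γr))·x2*. In particular, the stationary variance always exceeds the stationary mean, and the stationary coefficient of variation equals √((1 + kp/(γp + γr))/x2*). -/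
/-- State matrix of the first- and second-order moment equations of the
gene expression network, in the state `x = (x1, x2, x3, x4, x5)`. -/
def Asys (kp γp γr : ℝ) : Matrix (Fin 5) (Fin 5) ℝ :=
  !![-γr, 0, 0, 0, 0;
     kp, -γp, 0, 0, 0;
     γr, 0, -2 * γr, 0, 0;
     0, 0, kp, -(γr + γp), 0;
     kp, γp, 0, 2 * kp, -2 * γp]

/-- Input vector of the moment equations. -/
def Bsys : Fin 5 → ℝ := ![1, 0, 1, 0, 0]

set_option maxHeartbeats 2000000 in
theorem stmt9 (kr kp γp γr : ℝ)
    (hkr : 0 < kr) (hkp : 0 < kp) (hγp : 0 < γp) (hγr : 0 < γr) :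
    (∃! x : Fin 5 → ℝ, (Asys kp γp γr).mulVec x + kr • Bsys = 0) ∧
    (∀ x : Fin 5 → ℝ, (Asys kp γp γr).mulVec x + kr • Bsys = 0 →
      x 1 = kp * kr / (γr * γp) ∧
      x 4 = (1 + kp / (γp + γr)) * x 1 ∧
      x 1 < x 4 ∧
      Real.sqrt (x 4) / x 1 = Real.sqrt ((1 + kp / (γp + γr)) / x 1)) := by
  have hγrp : (0:ℝ) < γr + γp := by linarith
  have hγpr : (0:ℝ) < γp + γr := by linarith
  set xs : Fin 5 → ℝ := ![kr/γr, kp*kr/(γr*γp), kr/γr, kp*kr/(γr*(γr+γp)),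
      (1 + kp/(γp+γr)) * (kp*kr/(γr*γp))] with hxs
  have key : ∀ x : Fin 5 → ℝ, (Asys kp γp γr).mulVec x + kr • Bsys = 0 → x = xs := by
    intro x h
    have h0 := congrFun h 0
    have h1 := congrFun h 1
    have h2 := congrFun h 2
    have h3 := congrFun h 3
    have h4 := congrFun h 4
    simp [Asys, Bsys, Matrix.mulVec, dotProduct, Fin.sum_univ_five] at h0 h1 h2 h3 h4
    have e0 : x 0 = kr/γr := by field_simp; linarith
    have e1 : x 1 = kp*kr/(γr*γp) := by
      field_simp; nlinarith [h1, e0, mul_pos hγr hγp]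
    have e2 : x 2 = kr/γr := by field_simp; nlinarith [h2, e0]
    have e3 : x 3 = kp*kr/(γr*(γr+γp)) := by
      field_simp; nlinarith [h3, e2, mul_pos hγr hγrp]
    have e4 : x 4 = (1 + kp/(γp+γr)) * (kp*kr/(γr*γp)) := by
      have h4' : x 4 = (kp * x 0 + γp * x 1 + 2*kp*x 3) / (2*γp) := by
        field_simp; linarith
      rw [h4', e0, e1, e3]; field_simp; ring
    funext i
    fin_cases i <;> simp [hxs, e0, e1, e2, e3, e4]
  constructor
  · refine ⟨xs, ?_, key⟩
    funext i
    fin_cases i <;>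
      simp [Asys, Bsys, hxs, Matrix.mulVec, dotProduct, Fin.sum_univ_five] <;>
      field_simp <;> ring
  · intro x h
    have hx := key x h
    have hx1 : x 1 = kp * kr / (γr * γp) := by rw [hx]; simp [hxs]
    have hx4v : x 4 = (1 + kp/(γp+γr)) * (kp * kr / (γr * γp)) := by rw [hx]; simp [hxs]
    have hx4 : x 4 = (1 + kp/(γp+γr)) * x 1 := by rw [hx1, hx4v]
    have hx1pos : 0 < x 1 := by
      rw [hx1]; positivity
    have hc : (0:ℝ) < 1 + kp/(γp+γr) := by positivity
    refine ⟨hx1, hx4, ?_, ?_⟩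
    · rw [hx4]
      nlinarith [div_pos hkp hγpr, hx1pos]
    · have gen : ∀ a m : ℝ, 0 ≤ a → 0 < m → Real.sqrt (a * m) / m = Real.sqrt (a / m) := by
        intro a m ha hm
        rw [show a / m = a * m / (m * m) by field_simp,
          Real.sqrt_div (by positivity), Real.sqrt_mul_self hm.le]
      rw [hx4]; exact gen _ _ hc.le hx1pos
end

section
/- Let kp, γp > 0 and let μ*, σ*² > 0 with σ*² ≠ μ*. Define u2* = −γp + kp·μ*/(σ*² − μ*) and u1* = (γp/kp)·μ*·u2*. Then u1* > 0 and u2* > 0 if and only if μ* < σ*² < (1 + kp/γp)·μ*. Hence the set of admissible mean–variance reference pairs is the open nonempty set A = { (x, y) ∈ ℝ²_{>0} : x < y < (1 + kp/γp)·x }. -/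
theorem stmt10 (kp γp μ σ2 : ℝ) (hkp : 0 < kp) (hγp : 0 < γp)
    (hμ : 0 < μ) (hσ2 : 0 < σ2) (hne : σ2 ≠ μ) :
    -- positivity of the equilibrium inputs characterizes admissibility
    ((0 < (γp / kp) * μ * (-γp + kp * μ / (σ2 - μ)) ∧
        0 < -γp + kp * μ / (σ2 - μ)) ↔
      (μ < σ2 ∧ σ2 < (1 + kp / γp) * μ)) ∧
    -- the admissible set is open and nonempty
    IsOpen {p : ℝ × ℝ | 0 < p.1 ∧ 0 < p.2 ∧ p.1 < p.2 ∧ p.2 < (1 + kp / γp) * p.1} ∧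
    {p : ℝ × ℝ | 0 < p.1 ∧ 0 < p.2 ∧ p.1 < p.2 ∧ p.2 < (1 + kp / γp) * p.1}.Nonempty := by
  have hc : 0 < (γp / kp) * μ := by positivity
  refine ⟨?_, ?_, ?_⟩
  · constructor
    · rintro ⟨_, hu2⟩
      have hlt : μ < σ2 := by
        by_contra h
        push_neg at h
        have h' : σ2 - μ < 0 := by
          rcases lt_or_eq_of_le h with h1 | h1
          · linarith
          · exact absurd h1 hne
        have : kp * μ / (σ2 - μ) < 0 := div_neg_of_pos_of_neg (by positivity) h'
        linarith
      have hd : 0 < σ2 - μ := by linarith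
      refine ⟨hlt, ?_⟩
      have h2 : γp < kp * μ / (σ2 - μ) := by linarith
      have h3 : γp * (σ2 - μ) < kp * μ := by
        have := (lt_div_iff₀ hd).mp h2
        linarith
      have hkd : kp / γp * γp = kp := div_mul_cancel₀ kp hγp.ne'
      rw [show (1 + kp / γp) * μ = μ + (kp / γp) * μ by ring]
      have : σ2 - μ < kp * μ / γp := (lt_div_iff₀' hγp).mpr (by linarith)
      have : σ2 - μ < kp / γp * μ := by rw [div_mul_eq_mul_div]; linarith
      linarith
    · rintro ⟨h1, h2⟩
      have hd : 0 < σ2 - μ := by linarith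
      have h3 : σ2 - μ < kp / γp * μ := by
        have := h2; nlinarith
      have h4 : γp * (σ2 - μ) < kp * μ := by
        have := (mul_lt_mul_of_pos_left h3 hγp)
        calc γp * (σ2 - μ) < γp * (kp / γp * μ) := this
          _ = kp * μ := by field_simp
      have hu2 : 0 < -γp + kp * μ / (σ2 - μ) := by
        have : γp < kp * μ / (σ2 - μ) := (lt_div_iff₀ hd).mpr (by linarith)
        linarith
      exact ⟨mul_pos hc hu2, hu2⟩
  · have : {p : ℝ × ℝ | 0 < p.1 ∧ 0 < p.2 ∧ p.1 < p.2 ∧ p.2 < (1 + kp / γp) * p.1}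
      = ({p : ℝ × ℝ | 0 < p.1} ∩ {p | 0 < p.2} ∩ {p | p.1 < p.2}
        ∩ {p | p.2 < (1 + kp / γp) * p.1}) := by
      ext p; simp [Set.mem_setOf_eq]; tauto
    rw [this]
    refine ((((isOpen_lt continuous_const continuous_fst).inter
      (isOpen_lt continuous_const continuous_snd)).inter
      (isOpen_lt continuous_fst continuous_snd)).inter
      (isOpen_lt continuous_snd (continuous_const.mul continuous_fst)))
  · refine ⟨(1, 1 + kp / (2 * γp)), ?_⟩
    have hq : 0 < kp / (2 * γp) := by positivity
    have hq2 : kp / (2 * γp) < kp / γp := by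
      apply div_lt_div_of_pos_left hkp hγp; linarith
    simp only [Set.mem_setOf_eq]
    refine ⟨one_pos, by linarith, by linarith, by linarith⟩
end

section
/- Let γ1, γ2, b > 0, ζ > 0 and kc ∈ ℝ. The matrix A(ζ) = [[−γ1 − b·ζ, 0, kc], [b·ζ/2, −γ2, 0], [0, −1, 0]] is Hurwitz (all eigenvalues have negative real part) if and only if 0 < kc < 2γ2·(γ1 + γ2 + b·ζ)·(γ1 + b·ζ)/(b·ζ). -/
lemma cubic_hurwitz (a2 a1 a0 : ℝ) (h2 : 0 < a2) (h1 : 0 < a1) :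
    (∀ μ : ℂ, μ^3 + a2*μ^2 + a1*μ + a0 = 0 → μ.re < 0) ↔ (0 < a0 ∧ a0 < a2*a1) := by
  constructor
  · intro h
    constructor
    · by_contra h0
      push_neg at h0
      set M : ℝ := 1 + |a0| with hMdef
      have habs := abs_nonneg a0
      have hM1 : (1:ℝ) ≤ M := by rw [hMdef]; linarith
      have hcube : M ≤ M^3 := by nlinarith [mul_nonneg (mul_nonneg (by linarith : (0:ℝ) ≤ M) (by linarith : (0:ℝ) ≤ M-1)) (by linarith : (0:ℝ) ≤ M+1)]
      have hpM : (0:ℝ) ≤ M^3 + a2*M^2 + a1*M + a0 := by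
        have : -|a0| ≤ a0 := neg_abs_le a0
        nlinarith [sq_nonneg M]
      have hcont : ContinuousOn (fun x : ℝ => x^3 + a2*x^2 + a1*x + a0) (Set.Icc 0 M) := by
        fun_prop
      have hIVT := intermediate_value_Icc (by linarith : (0:ℝ) ≤ M) hcont
      have h0mem : (0:ℝ) ∈ Set.Icc ((0:ℝ)^3 + a2*0^2 + a1*0 + a0) (M^3 + a2*M^2 + a1*M + a0) := by
        rw [Set.mem_Icc]
        constructor <;> nlinarith
      obtain ⟨x, hx, hpx⟩ := hIVT h0mem
      have hpx' : x^3 + a2*x^2 + a1*x + a0 = 0 := hpx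
      have hroot : ((x:ℂ))^3 + a2*(x:ℂ)^2 + a1*(x:ℂ) + a0 = 0 := by
        exact_mod_cast congrArg Complex.ofReal hpx'
      have hneg := h x hroot
      simp at hneg
      linarith [hx.1]
    · by_contra h0
      push_neg at h0
      set d : ℝ := a2*a1 - a0 with hd
      set M : ℝ := 1 + |d| with hMdef
      have habs := abs_nonneg d
      have hM1 : (1:ℝ) ≤ M := by rw [hMdef]; linarith
      have hcube : M ≤ M^3 := by nlinarith [mul_nonneg (mul_nonneg (by linarith : (0:ℝ) ≤ M) (by linarith : (0:ℝ) ≤ M-1)) (by linarith : (0:ℝ) ≤ M+1)]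
      have hgM : (0:ℝ) ≤ 8*M^3 + 8*a2*M^2 + 2*(a1+a2^2)*M + d := by
        have : -|d| ≤ d := neg_abs_le d
        nlinarith [sq_nonneg M, sq_nonneg a2]
      have hcont : ContinuousOn (fun x : ℝ => 8*x^3 + 8*a2*x^2 + 2*(a1+a2^2)*x + d)
          (Set.Icc 0 M) := by fun_prop
      have hIVT := intermediate_value_Icc (by linarith : (0:ℝ) ≤ M) hcont
      have h0mem : (0:ℝ) ∈ Set.Icc (8*(0:ℝ)^3 + 8*a2*0^2 + 2*(a1+a2^2)*0 + d)
          (8*M^3 + 8*a2*M^2 + 2*(a1+a2^2)*M + d) := by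
        rw [Set.mem_Icc]
        constructor
        · nlinarith [sq_nonneg a2]
        · exact hgM
      obtain ⟨x, hx, hgx0⟩ := hIVT h0mem
      have hgx : 8*x^3 + 8*a2*x^2 + 2*(a1+a2^2)*x + (a2*a1 - a0) = 0 := by
        have : 8*x^3 + 8*a2*x^2 + 2*(a1+a2^2)*x + d = 0 := hgx0
        rw [hd] at this; exact this
      set y : ℝ := Real.sqrt (3*x^2 + 2*a2*x + a1) with hy
      have hs : 0 ≤ 3*x^2 + 2*a2*x + a1 := by nlinarith [hx.1, sq_nonneg x]
      have hy2 : y^2 = 3*x^2 + 2*a2*x + a1 := Real.sq_sqrt hs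
      have hroot : ((x:ℂ) + y*Complex.I)^3 + a2*((x:ℂ) + y*Complex.I)^2
          + a1*((x:ℂ) + y*Complex.I) + a0 = 0 := by
        have hy2' : ((y:ℂ))^2 = 3*(x:ℂ)^2 + 2*a2*x + a1 := by
          exact_mod_cast congrArg Complex.ofReal hy2
        have hg' : (8:ℂ)*(x:ℂ)^3 + 8*a2*(x:ℂ)^2 + 2*(a1+a2^2)*(x:ℂ) + (a2*a1 - a0) = 0 := by
          exact_mod_cast congrArg Complex.ofReal hgx
        have hI : Complex.I^2 = -1 := Complex.I_sq
        linear_combination ((-3:ℂ)*x - a2 - y*Complex.I) * hy2' - hg' +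
          ((3:ℂ)*x*y^2 + a2*y^2 + Complex.I*y^3) * hI
      have hneg := h _ hroot
      simp at hneg
      linarith [hx.1]
  · rintro ⟨ha0, hlt⟩ μ hμ
    by_contra hre0
    push_neg at hre0
    have hre1 := congrArg Complex.re hμ
    have him1 := congrArg Complex.im hμ
    simp [pow_succ, Complex.mul_re, Complex.mul_im, Complex.add_re, Complex.add_im,
      Complex.ofReal_re, Complex.ofReal_im] at hre1 him1
    rcases eq_or_ne μ.im 0 with hy | hy
    · rw [hy] at hre1
      nlinarith [hre1, mul_nonneg hre0 (mul_nonneg hre0 hre0),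
        mul_nonneg h2.le (mul_nonneg hre0 hre0), mul_nonneg h1.le hre0]
    · have him2 : μ.im^2 = 3*μ.re^2 + 2*a2*μ.re + a1 := by
        have hmul : μ.im * (3*μ.re^2 - μ.im^2 + 2*a2*μ.re + a1) = 0 := by
          linear_combination him1
        rcases mul_eq_zero.1 hmul with h' | h'
        · exact absurd h' hy
        · linarith
      have key : a0 = 8*μ.re^3 + 8*a2*μ.re^2 + 2*(a1+a2^2)*μ.re + a2*a1 := by
        linear_combination hre1 + (3*μ.re + a2) * him2
      nlinarith [key, mul_nonneg hre0 (mul_nonneg hre0 hre0),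
        mul_nonneg h2.le (mul_nonneg hre0 hre0),
        mul_nonneg (add_pos h1 (pow_pos h2 2)).le hre0]

theorem stmt16 (γ1 γ2 b ζ kc : ℝ) (hγ1 : 0 < γ1) (hγ2 : 0 < γ2) (hb : 0 < b)
    (hζ : 0 < ζ) :
    IsHurwitz !![-γ1 - b * ζ, 0, kc; b * ζ / 2, -γ2, 0; 0, -1, 0] ↔
      (0 < kc ∧ kc < 2 * γ2 * (γ1 + γ2 + b * ζ) * (γ1 + b * ζ) / (b * ζ)) := by
  unfold IsHurwitz
  have hbz : 0 < b * ζ := mul_pos hb hζ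
  have hspec : ∀ μ : ℂ,
      μ ∈ spectrum ℂ ((!![-γ1 - b * ζ, 0, kc; b * ζ / 2, -γ2, 0; 0, -1, 0]).map Complex.ofReal) ↔
      μ^3 + ((γ1 + b*ζ + γ2 : ℝ):ℂ)*μ^2 + (((γ1+b*ζ)*γ2 : ℝ):ℂ)*μ + ((kc*(b*ζ)/2 : ℝ):ℂ) = 0 := by
    intro μ
    rw [spectrum.mem_iff, Matrix.isUnit_iff_isUnit_det, isUnit_iff_ne_zero, not_not,
      Algebra.algebraMap_eq_smul_one]
    have : (μ • (1: Matrix (Fin 3) (Fin 3) ℂ) -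
        (!![-γ1 - b * ζ, 0, kc; b * ζ / 2, -γ2, 0; 0, -1, 0]).map Complex.ofReal).det
        = μ^3 + ((γ1 + b*ζ + γ2 : ℝ):ℂ)*μ^2 + (((γ1+b*ζ)*γ2 : ℝ):ℂ)*μ + ((kc*(b*ζ)/2 : ℝ):ℂ) := by
      simp [Matrix.det_fin_three, Matrix.smul_apply, Matrix.one_apply, Matrix.map_apply,
        Matrix.vecHead, Matrix.vecTail]
      push_cast
      ring
    rw [this]
  have h2 : 0 < γ1 + b*ζ + γ2 := by linarith
  have h1 : 0 < (γ1+b*ζ)*γ2 := by positivity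
  rw [show (∀ μ ∈ spectrum ℂ ((!![-γ1 - b * ζ, 0, kc; b * ζ / 2, -γ2, 0; 0, -1, 0]).map Complex.ofReal), μ.re < 0) ↔
      (∀ μ : ℂ, μ^3 + ((γ1 + b*ζ + γ2 : ℝ):ℂ)*μ^2 + (((γ1+b*ζ)*γ2 : ℝ):ℂ)*μ + ((kc*(b*ζ)/2 : ℝ):ℂ) = 0 → μ.re < 0) from
      forall_congr' fun μ => imp_congr (hspec μ) Iff.rfl,
    cubic_hurwitz _ _ _ h2 h1]
  constructor
  · rintro ⟨hp, hq⟩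
    refine ⟨by nlinarith, ?_⟩
    rw [lt_div_iff₀ hbz]
    nlinarith
  · rintro ⟨hp, hq⟩
    rw [lt_div_iff₀ hbz] at hq
    exact ⟨by nlinarith, by nlinarith⟩
end

section
/- Let γ1, γ2, b > 0 and suppose the controller gain satisfies 0 < kc < 2γ2·(2γ1 + γ2 + 2√(γ1(γ1 + γ2))). Then for every ζ > 0, the matrix A(ζ) = [[−γ1 − b·ζ, 0, kc], [b·ζ/2, −γ2, 0], [0, −1, 0]] is Hurwitz. In particular, this single gain bound, which is independent of b and of the reference value, guarantees local exponential stability of the linearization of the integral-controlled dimerization network around every positive equilibrium. -/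
lemma cubic_hurwitz_s18 (p q r : ℝ) (hp : 0 < p) (hq : 0 < q) (hr : 0 < r) (h : r < p*q)
    (z : ℂ) (hz : z^3 + (p:ℂ)*z^2 + (q:ℂ)*z + (r:ℂ) = 0) : z.re < 0 := by
  by_contra hx
  push_neg at hx
  rw [Complex.ext_iff] at hz
  simp only [Complex.add_re, Complex.add_im, Complex.mul_re, Complex.mul_im,
    Complex.ofReal_re, Complex.ofReal_im, pow_succ, pow_zero, one_mul,
    Complex.one_re, Complex.one_im, Complex.zero_re, Complex.zero_im] at hz
  obtain ⟨h1, h2⟩ := hz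
  ring_nf at h1 h2
  set x := z.re with hxdef
  set y := z.im with hydef
  rcases eq_or_ne y 0 with hy | hy
  · rw [hy] at h1
    nlinarith [pow_nonneg hx 3, sq_nonneg x, mul_nonneg hx hq.le, mul_nonneg (mul_nonneg hx hx) hp.le]
  · have hfac : y * (2*p*x + 3*x^2 + q - y^2) = 0 := by linear_combination h2
    have hy2 : y^2 = 2*p*x + 3*x^2 + q := by
      rcases mul_eq_zero.mp hfac with h' | h'
      · exact absurd h' hy
      · linarith
    rw [hy2] at h1
    nlinarith [pow_nonneg hx 3, sq_nonneg x, mul_pos hp hq, mul_nonneg hx hq.le,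
      mul_nonneg (mul_nonneg hx hx) hp.le, mul_nonneg hx (mul_pos hp hp).le]

theorem stmt18 (γ1 γ2 b kc : ℝ) (hγ1 : 0 < γ1) (hγ2 : 0 < γ2) (hb : 0 < b)
    (hkc0 : 0 < kc)
    (hkc : kc < 2 * γ2 * (2 * γ1 + γ2 + 2 * Real.sqrt (γ1 * (γ1 + γ2)))) :
    ∀ ζ : ℝ, 0 < ζ →
      IsHurwitz !![-γ1 - b * ζ, 0, kc; b * ζ / 2, -γ2, 0; 0, -1, 0] := by
  intro ζ hζ μ h
  have ht : 0 < b * ζ := mul_pos hb hζ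
  have hz : μ^3 + ((γ1 + b*ζ + γ2 : ℝ):ℂ)*μ^2 + (((γ1 + b*ζ)*γ2 : ℝ):ℂ)*μ
      + ((kc * (b*ζ) / 2 : ℝ):ℂ) = 0 := by
    rw [spectrum.mem_iff, Matrix.isUnit_iff_isUnit_det, isUnit_iff_ne_zero, not_not] at h
    rw [Algebra.algebraMap_eq_smul_one, Matrix.det_fin_three] at h
    simp [Matrix.smul_apply, Matrix.one_apply, Matrix.map_apply, Matrix.vecHead,
      Matrix.vecTail] at h
    push_cast at h ⊢
    linear_combination h
  refine cubic_hurwitz_s18 _ _ _ (by positivity) (by positivity) (by positivity) ?_ μ hz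
  set s := Real.sqrt (γ1 * (γ1 + γ2)) with hs
  have hs0 : 0 ≤ s := Real.sqrt_nonneg _
  have hs2 : s^2 = γ1 * (γ1 + γ2) := Real.sq_sqrt (by positivity)
  set t := b * ζ
  nlinarith [sq_nonneg (t - s), mul_pos ht hγ2, mul_pos hγ2 ht,
    mul_lt_mul_of_pos_right hkc ht]
end
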